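/- Let U ⊆ ℂ be a nonempty open connected set, let f_n : U → ℂ be a sequence of holomorphic functions converging locally uniformly on U to a function f, and assume f is nonconstant. Then for every compact set K contained in the image f(U) there exists N such that for all n ≥ N, K is contained in the image f_n(U). -/

import Mathlib

open Metric Filter Set
open scoped Topology

/-- Local key lemma: around each point of the image of `F`, there is a small ball eventually
contained in the images `f n '' U`. -/
theorem stmt_1_key (U : Set ℂ) (hU : IsOpen U) (hUconn : IsConnected U)
    (f : ℕ → ℂ → ℂ) (F : ℂ → ℂ)
    (hol : ∀ n, DifferentiableOn ℂ (f n) U)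
    (hconv : TendstoLocallyUniformlyOn f F Filter.atTop U)
    (hnc : ¬ ∃ c : ℂ, ∀ z ∈ U, F z = c) :
    ∀ w₀ ∈ F '' U, ∃ δ > 0, ∃ N : ℕ, ∀ n ≥ N, ball w₀ δ ⊆ f n '' U := by
  rintro w₀ ⟨z₀, hz₀U, rfl⟩
  have hF : DifferentiableOn ℂ F U :=
    hconv.differentiableOn (Filter.Eventually.of_forall hol) hU
  have hFan : AnalyticOnNhd ℂ F U := hF.analyticOnNhd hU
  have hne : ∀ᶠ z in 𝓝[≠] z₀, F z ≠ F z₀ := by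
    rcases (hFan z₀ hz₀U).eventually_eq_or_eventually_ne analyticAt_const with h | h
    · exact absurd ⟨F z₀, fun z hz =>
        hFan.eqOn_of_preconnected_of_eventuallyEq analyticOnNhd_const
          hUconn.isPreconnected hz₀U h hz⟩ hnc
    · exact h
  obtain ⟨r, hr, hrsub⟩ :
      ∃ r > 0, closedBall z₀ r ⊆ {z | z ∈ U ∧ (z ≠ z₀ → F z ≠ F z₀)} := by
    have : {z | z ∈ U ∧ (z ≠ z₀ → F z ≠ F z₀)} ∈ 𝓝 z₀ :=
      Filter.inter_mem (hU.mem_nhds hz₀U) (eventually_nhdsWithin_iff.mp hne)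
    simpa using Metric.nhds_basis_closedBall.mem_iff.mp this
  have hrU : closedBall z₀ r ⊆ U := fun z hz => (hrsub hz).1
  -- minimum of ‖F z - F z₀‖ on the sphere
  have hsne : (sphere z₀ r).Nonempty := NormedSpace.sphere_nonempty.mpr hr.le
  have hcont : ContinuousOn (fun z => ‖F z - F z₀‖) (sphere z₀ r) :=
    continuous_norm.comp_continuousOn
      (((hF.continuousOn.mono hrU).sub continuousOn_const).mono sphere_subset_closedBall)
  obtain ⟨x, hx, hfx⟩ := (isCompact_sphere z₀ r).exists_isMinOn hsne hcont
  set ε : ℝ := ‖F x - F z₀‖ with hεdef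
  have hxne : F x ≠ F z₀ :=
    (hrsub (sphere_subset_closedBall hx)).2 (ne_of_mem_sphere hx hr.ne')
  have hε : 0 < ε := norm_sub_pos_iff.mpr hxne
  -- uniform convergence on the closed ball
  have hunif : TendstoUniformlyOn f F atTop (closedBall z₀ r) :=
    (tendstoLocallyUniformlyOn_iff_forall_isCompact hU).mp hconv _ hrU
      (isCompact_closedBall z₀ r)
  have hev : ∀ᶠ n in atTop, ∀ z ∈ closedBall z₀ r, dist (F z) (f n z) < ε / 6 :=
    (Metric.tendstoUniformlyOn_iff.mp hunif) (ε / 6) (by linarith)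
  obtain ⟨N, hN⟩ := eventually_atTop.mp hev
  refine ⟨ε / 6, by linarith, N, fun n hn => ?_⟩
  set g : ℂ → ℂ := f n with hg
  have hbound : ∀ z ∈ closedBall z₀ r, dist (F z) (g z) < ε / 6 := hN n hn
  -- lower bound for g on the sphere
  have hsphere : ∀ z ∈ sphere z₀ r, 2 * ε / 3 ≤ ‖g z - g z₀‖ := by
    intro z hz
    have h1 : dist (F z) (g z) < ε / 6 := hbound z (sphere_subset_closedBall hz)
    have h2 : dist (F z₀) (g z₀) < ε / 6 :=
      hbound z₀ (mem_closedBall_self hr.le)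
    have h3 : ε ≤ ‖F z - F z₀‖ := hfx hz
    have h4 : ‖F z - F z₀‖ ≤ ‖g z - g z₀‖ + dist (F z) (g z) + dist (F z₀) (g z₀) := by
      rw [dist_eq_norm, dist_eq_norm]
      calc ‖F z - F z₀‖ = ‖(F z - g z) + (g z - g z₀) + (g z₀ - F z₀)‖ := by ring_nf
        _ ≤ ‖(F z - g z) + (g z - g z₀)‖ + ‖g z₀ - F z₀‖ := norm_add_le _ _
        _ ≤ ‖F z - g z‖ + ‖g z - g z₀‖ + ‖g z₀ - F z₀‖ := by
            gcongr; exact norm_add_le _ _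
        _ = ‖g z - g z₀‖ + ‖F z - g z‖ + ‖F z₀ - g z₀‖ := by
            rw [norm_sub_rev (g z₀)]; ring
    linarith
  -- g is not eventually constant at z₀
  have hgan : AnalyticOnNhd ℂ g U := (hol n).analyticOnNhd hU
  have hfreq : ∃ᶠ z in 𝓝 z₀, g z ≠ g z₀ := by
    by_contra h
    rw [Filter.not_frequently] at h
    have heq : Set.EqOn g (fun _ => g z₀) U :=
      hgan.eqOn_of_preconnected_of_eventuallyEq analyticOnNhd_const hUconn.isPreconnected hz₀U
        (h.mono fun z hz => not_not.mp hz)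
    have h1 : 2 * ε / 3 ≤ ‖g x - g z₀‖ := hsphere x hx
    have h2 : g x = g z₀ := heq (hrU (sphere_subset_closedBall hx))
    rw [h2, sub_self, norm_zero] at h1
    linarith
  have hdc : DiffContOnCl ℂ g (ball z₀ r) :=
    ⟨(hol n).mono (ball_subset_closedBall.trans hrU),
     (hol n).continuousOn.mono (by rw [closure_ball z₀ hr.ne']; exact hrU)⟩
  have himg := hdc.ball_subset_image_closedBall hr (fun z hz => hsphere z hz) hfreq
  intro w hw
  have h2 : dist (F z₀) (g z₀) < ε / 6 := hbound z₀ (mem_closedBall_self hr.le)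
  have h3 : dist w (g z₀) < 2 * ε / 3 / 2 := by
    have ht := dist_triangle w (F z₀) (g z₀)
    have hw' : dist w (F z₀) < ε / 6 := mem_ball.mp hw
    linarith
  exact Set.image_mono (f := g) hrU (himg (mem_ball.mpr h3))

/-- If holomorphic `f_n` converge locally uniformly on a nonempty open connected `U ⊆ ℂ`
to a nonconstant `f`, then every compact `K ⊆ f(U)` is eventually contained in `f_n(U)`. -/
theorem stmt_1 (U : Set ℂ) (hU : IsOpen U) (hUne : U.Nonempty) (hUconn : IsConnected U)
    (f : ℕ → ℂ → ℂ) (F : ℂ → ℂ)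
    (hol : ∀ n, DifferentiableOn ℂ (f n) U)
    (hconv : TendstoLocallyUniformlyOn f F Filter.atTop U)
    (hnc : ¬ ∃ c : ℂ, ∀ z ∈ U, F z = c) :
    ∀ K : Set ℂ, IsCompact K → K ⊆ F '' U →
      ∃ N : ℕ, ∀ n ≥ N, K ⊆ (f n) '' U := by
  have key := stmt_1_key U hU hUconn f F hol hconv hnc
  intro K hK hKF
  have key' : ∀ w ∈ K, ∃ δ > 0, ∃ N : ℕ, ∀ n ≥ N, ball w δ ⊆ f n '' U :=
    fun w hw => key w (hKF hw)
  choose! δ hδ N hN using key'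
  obtain ⟨t, hcov⟩ := hK.elim_nhds_subcover' (fun w hw => ball w (δ w))
    (fun w hw => ball_mem_nhds w (hδ w hw))
  refine ⟨t.sup (fun x => N x.1), fun n hn w hw => ?_⟩
  obtain ⟨x, hxt, hwx⟩ := Set.mem_iUnion₂.mp (hcov hw)
  exact hN x.1 x.2 n (le_trans (Finset.le_sup (f := fun x => N x.1) hxt) hn) hwx
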